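/- Cycle-normalization: for every CLKID^ω pre-proof (D, C) there exists a cycle-normal CLKID^ω pre-proof (D', C') (one in which each companion is an ancestor of its corresponding bud) whose tree-unfolding is equal to the tree-unfolding of (D, C). Moreover, the same rules occur in D' as in D (in particular, if (D, C) is cut-free then so is (D', C')). -/

import Mathlib

namespace CLKID

/-- Terms of the language: variables, the constant `0`, and the unary function `s`. -/
inductive Tm : Type where
  | var : ℕ → Tm
  | zero : Tm
  | s : Tm → Tm
deriving DecidableEq

/-- `sIter n t` is the term `s^n t`. -/
def sIter : ℕ → Tm → Tm
  | 0, t => t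
  | n + 1, t => Tm.s (sIter n t)

/-- Substitution on terms. -/
def Tm.subst (θ : ℕ → Tm) : Tm → Tm
  | .var x => θ x
  | .zero => .zero
  | .s t => .s (t.subst θ)

/-- Free variables of a term. -/
def Tm.fv : Tm → Set ℕ
  | .var x => {x}
  | .zero => ∅
  | .s t => t.fv

/-- Subterms of a term. -/
def Tm.sub : Tm → Set Tm
  | .var x => {Tm.var x}
  | .zero => {Tm.zero}
  | .s t => insert (Tm.s t) t.sub

/-- The variable of a term (`none` if the term is of the form `s^n 0`). -/
def Tm.varOf : Tm → Option ℕ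
  | .var x => some x
  | .zero => none
  | .s t => t.varOf

/-- Formulas: equations, the two inductive-predicate atoms `Add1`/`Add2`,
    and the usual first-order connectives and quantifiers. -/
inductive Fm : Type where
  | eq : Tm → Tm → Fm
  | add1 : Tm → Tm → Tm → Fm
  | add2 : Tm → Tm → Tm → Fm
  | not : Fm → Fm
  | and : Fm → Fm → Fm
  | or : Fm → Fm → Fm
  | imp : Fm → Fm → Fm
  | all : ℕ → Fm → Fm
  | ex : ℕ → Fm → Fm
deriving DecidableEq

/-- Substitution on formulas. -/
def Fm.subst (θ : ℕ → Tm) : Fm → Fm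
  | .eq t u => .eq (t.subst θ) (u.subst θ)
  | .add1 a b c => .add1 (a.subst θ) (b.subst θ) (c.subst θ)
  | .add2 a b c => .add2 (a.subst θ) (b.subst θ) (c.subst θ)
  | .not φ => .not (φ.subst θ)
  | .and φ ψ => .and (φ.subst θ) (ψ.subst θ)
  | .or φ ψ => .or (φ.subst θ) (ψ.subst θ)
  | .imp φ ψ => .imp (φ.subst θ) (ψ.subst θ)
  | .all x φ => .all x (φ.subst (Function.update θ x (Tm.var x)))
  | .ex x φ => .ex x (φ.subst (Function.update θ x (Tm.var x)))

/-- Free variables of a formula. -/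
def Fm.fv : Fm → Set ℕ
  | .eq t u => t.fv ∪ u.fv
  | .add1 a b c => a.fv ∪ b.fv ∪ c.fv
  | .add2 a b c => a.fv ∪ b.fv ∪ c.fv
  | .not φ => φ.fv
  | .and φ ψ => φ.fv ∪ ψ.fv
  | .or φ ψ => φ.fv ∪ ψ.fv
  | .imp φ ψ => φ.fv ∪ ψ.fv
  | .all x φ => φ.fv \ {x}
  | .ex x φ => φ.fv \ {x}

/-- Terms occurring in a formula. -/
def Fm.tms : Fm → Set Tm
  | .eq t u => t.sub ∪ u.sub
  | .add1 a b c => a.sub ∪ b.sub ∪ c.sub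
  | .add2 a b c => a.sub ∪ b.sub ∪ c.sub
  | .not φ => φ.tms
  | .and φ ψ => φ.tms ∪ ψ.tms
  | .or φ ψ => φ.tms ∪ ψ.tms
  | .imp φ ψ => φ.tms ∪ ψ.tms
  | .all _ φ => φ.tms
  | .ex _ φ => φ.tms

/-- The substitution `[x := t]`. -/
def sub1 (x : ℕ) (t : Tm) : ℕ → Tm := fun y => if y = x then t else Tm.var y

/-- The simultaneous substitution `[v1 := t, v2 := u]`. -/
def sub2 (v1 v2 : ℕ) (t u : Tm) : ℕ → Tm :=
  fun z => if z = v1 then t else if z = v2 then u else Tm.var z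

/-- `≡_Γ`: the smallest congruence relation on terms containing all pairs `(t, u)`
    with the equation `t = u` in `Γ`. -/
inductive EqvTm (Γ : Set Fm) : Tm → Tm → Prop where
  | base {t u : Tm} : Fm.eq t u ∈ Γ → EqvTm Γ t u
  | refl (t : Tm) : EqvTm Γ t t
  | symm {t u : Tm} : EqvTm Γ t u → EqvTm Γ u t
  | trans {t u v : Tm} : EqvTm Γ t u → EqvTm Γ u v → EqvTm Γ t v
  | sCongr {t u : Tm} : EqvTm Γ t u → EqvTm Γ (Tm.s t) (Tm.s u)

/-- `t ~_Γ u` : `s^n t ≡_Γ s^m u` for some naturals `n`, `m`. -/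
def DepTm (Γ : Set Fm) (t u : Tm) : Prop := ∃ n m : ℕ, EqvTm Γ (sIter n t) (sIter m u)

/-- A sequent: a pair of finite sets of formulas. -/
structure Seq where
  ant : Finset Fm
  suc : Finset Fm

/-- The antecedent of a sequent, as a set of formulas. -/
def antSet (S : Seq) : Set Fm := ↑S.ant

/-- `[Γ]` from Lemma on chains: `{ s^n t1 = s^n t2 | t1 = t2 ∈ Γ or t2 = t1 ∈ Γ }`. -/
def brkt (Γ : Set Fm) : Set Fm :=
  {φ | ∃ (n : ℕ) (t1 t2 : Tm), φ = Fm.eq (sIter n t1) (sIter n t2) ∧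
        (Fm.eq t1 t2 ∈ Γ ∨ Fm.eq t2 t1 ∈ Γ)}

/-- `B1(Γ ⊢ Δ)` : second arguments of `Add1` atoms in the consequent. -/
def B1 (S : Seq) : Set Tm := {b | ∃ a c, Fm.add1 a b c ∈ S.suc}

/-- `C(Γ ⊢ Δ)` : third arguments of `Add2` atoms in the antecedent
    or `Add1` atoms in the consequent. -/
def Cset (S : Seq) : Set Tm :=
  {c | (∃ a b, Fm.add2 a b c ∈ S.ant) ∨ (∃ a b, Fm.add1 a b c ∈ S.suc)}

/-- Index sequent. -/
def IndexSequent (S : Seq) : Prop :=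
  (∀ t ∈ B1 S, ∀ u ∈ Cset S, ¬ DepTm (antSet S) t u) ∧
  (∀ b ∈ B1 S, ∀ b' ∈ B1 S, ∀ n m : ℕ, EqvTm (antSet S) (sIter n b) (sIter m b') → n = m)

/-! ## The cyclic proof systems `CLKID^ω` and `CLKID^ω_a` -/

/-- Rule labels; each label carries the instance data needed to describe the
    rule application (principal formulas, substitutions, case variables, ...).
    `bud` labels bud leaves of cyclic derivation trees. -/
inductive Rule : Type where
  | ax
  | weak
  | cut (φ : Fm)
  | subst (θ : ℕ → Tm)
  | negL (φ : Fm)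
  | negR (φ : Fm)
  | andL (φ ψ : Fm)
  | andR (φ ψ : Fm)
  | orL (φ ψ : Fm)
  | orR (φ ψ : Fm)
  | impL (φ ψ : Fm)
  | impR (φ ψ : Fm)
  | allL (x : ℕ) (t : Tm) (φ : Fm)
  | allR (x : ℕ) (φ : Fm)
  | exL (x : ℕ) (φ : Fm)
  | exR (x : ℕ) (t : Tm) (φ : Fm)
  | eqR (t : Tm)
  | eqL (v1 v2 : ℕ) (t u : Tm)
  | eqLa (v1 v2 : ℕ) (t u : Tm)
  | add1R1
  | add1R2 (a b c : Tm)
  | add2R1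
  | add2R2 (a b c : Tm)
  | caseAdd1 (a b c : Tm) (x y z : ℕ)
  | caseAdd2 (a b c : Tm) (x y z : ℕ)
  | bud

/-- `Inf r S L` : the sequent `S` follows from the list of premises `L`
    by the rule (instance) `r`. -/
inductive Inf : Rule → Seq → List Seq → Prop where
  | ax {Γ Δ : Finset Fm} :
      (Γ ∩ Δ).Nonempty → Inf .ax ⟨Γ, Δ⟩ []
  | weak {Γ Δ Γ' Δ' : Finset Fm} :
      Γ' ⊆ Γ → Δ' ⊆ Δ → Inf .weak ⟨Γ, Δ⟩ [⟨Γ', Δ'⟩]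
  | cut {Γ Δ : Finset Fm} {φ : Fm} :
      Inf (.cut φ) ⟨Γ, Δ⟩ [⟨Γ, insert φ Δ⟩, ⟨insert φ Γ, Δ⟩]
  | subst {Γ Δ : Finset Fm} {θ : ℕ → Tm} :
      Inf (.subst θ) ⟨Γ.image (Fm.subst θ), Δ.image (Fm.subst θ)⟩ [⟨Γ, Δ⟩]
  | negL {Γ Δ : Finset Fm} {φ : Fm} :
      Inf (.negL φ) ⟨insert (.not φ) Γ, Δ⟩ [⟨Γ, insert φ Δ⟩]
  | negR {Γ Δ : Finset Fm} {φ : Fm} :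
      Inf (.negR φ) ⟨Γ, insert (.not φ) Δ⟩ [⟨insert φ Γ, Δ⟩]
  | andL {Γ Δ : Finset Fm} {φ ψ : Fm} :
      Inf (.andL φ ψ) ⟨insert (.and φ ψ) Γ, Δ⟩ [⟨insert φ (insert ψ Γ), Δ⟩]
  | andR {Γ Δ : Finset Fm} {φ ψ : Fm} :
      Inf (.andR φ ψ) ⟨Γ, insert (.and φ ψ) Δ⟩ [⟨Γ, insert φ Δ⟩, ⟨Γ, insert ψ Δ⟩]
  | orL {Γ Δ : Finset Fm} {φ ψ : Fm} :
      Inf (.orL φ ψ) ⟨insert (.or φ ψ) Γ, Δ⟩ [⟨insert φ Γ, Δ⟩, ⟨insert ψ Γ, Δ⟩]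
  | orR {Γ Δ : Finset Fm} {φ ψ : Fm} :
      Inf (.orR φ ψ) ⟨Γ, insert (.or φ ψ) Δ⟩ [⟨Γ, insert φ (insert ψ Δ)⟩]
  | impL {Γ Δ : Finset Fm} {φ ψ : Fm} :
      Inf (.impL φ ψ) ⟨insert (.imp φ ψ) Γ, Δ⟩ [⟨Γ, insert φ Δ⟩, ⟨insert ψ Γ, Δ⟩]
  | impR {Γ Δ : Finset Fm} {φ ψ : Fm} :
      Inf (.impR φ ψ) ⟨Γ, insert (.imp φ ψ) Δ⟩ [⟨insert φ Γ, insert ψ Δ⟩]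
  | allL {Γ Δ : Finset Fm} {x : ℕ} {t : Tm} {φ : Fm} :
      Inf (.allL x t φ) ⟨insert (.all x φ) Γ, Δ⟩ [⟨insert (φ.subst (sub1 x t)) Γ, Δ⟩]
  | allR {Γ Δ : Finset Fm} {x : ℕ} {φ : Fm} :
      (∀ ψ ∈ Γ ∪ Δ, x ∉ Fm.fv ψ) →
      Inf (.allR x φ) ⟨Γ, insert (.all x φ) Δ⟩ [⟨Γ, insert φ Δ⟩]
  | exL {Γ Δ : Finset Fm} {x : ℕ} {φ : Fm} :
      (∀ ψ ∈ Γ ∪ Δ, x ∉ Fm.fv ψ) →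
      Inf (.exL x φ) ⟨insert (.ex x φ) Γ, Δ⟩ [⟨insert φ Γ, Δ⟩]
  | exR {Γ Δ : Finset Fm} {x : ℕ} {t : Tm} {φ : Fm} :
      Inf (.exR x t φ) ⟨Γ, insert (.ex x φ) Δ⟩ [⟨Γ, insert (φ.subst (sub1 x t)) Δ⟩]
  | eqR {Γ Δ : Finset Fm} {t : Tm} :
      Inf (.eqR t) ⟨Γ, insert (.eq t t) Δ⟩ []
  | eqL {Γ Δ : Finset Fm} {v1 v2 : ℕ} {t u : Tm} :
      Inf (.eqL v1 v2 t u)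
        ⟨insert (.eq t u) (Γ.image (Fm.subst (sub2 v1 v2 t u))),
          Δ.image (Fm.subst (sub2 v1 v2 t u))⟩
        [⟨Γ.image (Fm.subst (sub2 v1 v2 u t)), Δ.image (Fm.subst (sub2 v1 v2 u t))⟩]
  | eqLa {Γ Δ : Finset Fm} {v1 v2 : ℕ} {t u : Tm} :
      Inf (.eqLa v1 v2 t u)
        ⟨insert (.eq t u) (Γ.image (Fm.subst (sub2 v1 v2 t u))),
          Δ.image (Fm.subst (sub2 v1 v2 t u))⟩
        [⟨insert (.eq t u) (Γ.image (Fm.subst (sub2 v1 v2 u t))),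
          Δ.image (Fm.subst (sub2 v1 v2 u t))⟩]
  | add1R1 {Γ Δ : Finset Fm} {b : Tm} :
      Inf .add1R1 ⟨Γ, insert (.add1 .zero b b) Δ⟩ []
  | add1R2 {Γ Δ : Finset Fm} {a b c : Tm} :
      Inf (.add1R2 a b c) ⟨Γ, insert (.add1 (.s a) b (.s c)) Δ⟩ [⟨Γ, insert (.add1 a b c) Δ⟩]
  | add2R1 {Γ Δ : Finset Fm} {b : Tm} :
      Inf .add2R1 ⟨Γ, insert (.add2 .zero b b) Δ⟩ []
  | add2R2 {Γ Δ : Finset Fm} {a b c : Tm} :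
      Inf (.add2R2 a b c) ⟨Γ, insert (.add2 (.s a) b c) Δ⟩ [⟨Γ, insert (.add2 a (.s b) c) Δ⟩]
  | caseAdd1 {Γ Δ : Finset Fm} {a b c : Tm} {x y z : ℕ} :
      x ≠ y → x ≠ z → y ≠ z →
      (∀ ψ ∈ insert (Fm.add1 a b c) (Γ ∪ Δ), x ∉ Fm.fv ψ ∧ y ∉ Fm.fv ψ ∧ z ∉ Fm.fv ψ) →
      Inf (.caseAdd1 a b c x y z) ⟨insert (.add1 a b c) Γ, Δ⟩
        [⟨insert (.eq a .zero) (insert (.eq b (.var y)) (insert (.eq c (.var y)) Γ)), Δ⟩,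
         ⟨insert (.eq a (.s (.var x))) (insert (.eq b (.var y)) (insert (.eq c (.s (.var z)))
            (insert (.add1 (.var x) (.var y) (.var z)) Γ))), Δ⟩]
  | caseAdd2 {Γ Δ : Finset Fm} {a b c : Tm} {x y z : ℕ} :
      x ≠ y → x ≠ z → y ≠ z →
      (∀ ψ ∈ insert (Fm.add2 a b c) (Γ ∪ Δ), x ∉ Fm.fv ψ ∧ y ∉ Fm.fv ψ ∧ z ∉ Fm.fv ψ) →
      Inf (.caseAdd2 a b c x y z) ⟨insert (.add2 a b c) Γ, Δ⟩
        [⟨insert (.eq a .zero) (insert (.eq b (.var y)) (insert (.eq c (.var y)) Γ)), Δ⟩,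
         ⟨insert (.eq a (.s (.var x))) (insert (.eq b (.var y)) (insert (.eq c (.var z))
            (insert (.add2 (.var x) (.s (.var y)) (.var z)) Γ))), Δ⟩]

/-- A labeling of tree nodes (finite sequences of naturals) by sequents and rules;
    `none` means the node is not in the tree. -/
abbrev Lbl : Type := List ℕ → Option (Seq × Rule)

/-- The children of `σ` are labeled exactly by the premise list `prems`. -/
def childrenOK (f : Lbl) (σ : List ℕ) (prems : List Seq) : Prop :=
  (∀ i : Fin prems.length, ∃ r', f (σ ++ [(i : ℕ)]) = some (prems.get i, r')) ∧
  (∀ i : ℕ, prems.length ≤ i → f (σ ++ [i]) = none)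

/-- Derivation trees (possibly infinite): prefix-closed domain, each non-bud node
    is the conclusion of a rule whose premises label its children, buds are leaves. -/
structure DTree where
  label : Lbl
  root_def : label [] ≠ none
  prefix_closed : ∀ σ τ : List ℕ, label (σ ++ τ) ≠ none → label σ ≠ none
  wf : ∀ σ S r, label σ = some (S, r) →
    (r = Rule.bud ∧ ∀ i : ℕ, label (σ ++ [i]) = none) ∨
    (r ≠ Rule.bud ∧ ∃ prems, Inf r S prems ∧ childrenOK label σ prems)

/-- `σ` is a bud of the labeling `f`. -/
def budAt (f : Lbl) (σ : List ℕ) : Prop := ∃ S, f σ = some (S, Rule.bud)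

/-- `σ` is an inner node of `f` labeled with the sequent `S`. -/
def innerWith (f : Lbl) (σ : List ℕ) (S : Seq) : Prop :=
  ∃ r, f σ = some (S, r) ∧ r ≠ Rule.bud

/-- A pre-proof: a finite derivation tree together with a function assigning to
    each bud a companion, i.e. an inner node labeled with the same sequent. -/
structure PreProof where
  D : DTree
  fin : {σ : List ℕ | D.label σ ≠ none}.Finite
  C : List ℕ → List ℕ
  comp : ∀ σ S, D.label σ = some (S, Rule.bud) → innerWith D.label (C σ) S

/-- Cycle-normality: every companion is an ancestor of its bud. -/
def PreProof.CycleNormal (P : PreProof) : Prop :=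
  ∀ σ S, P.D.label σ = some (S, Rule.bud) → P.C σ <+: σ

/-- `T` is the tree-unfolding of the pre-proof `P`: it agrees with `P.D` on
    non-bud nodes, below a bud it continues as below the bud's companion, and it
    is empty on nodes not in `P.D` having no bud prefix. -/
def IsUnfolding (P : PreProof) (T : Lbl) : Prop :=
  (∀ σ, P.D.label σ ≠ none → ¬ budAt P.D.label σ → T σ = P.D.label σ) ∧
  (∀ σ₁ σ₂ : List ℕ, budAt P.D.label σ₁ → T (σ₁ ++ σ₂) = T (P.C σ₁ ++ σ₂)) ∧
  (∀ σ, P.D.label σ = none → (∀ σ₁, σ₁ <+: σ → ¬ budAt P.D.label σ₁) → T σ = none)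

/-- An infinite path in the labeling `f`. -/
def IsInfPath (f : Lbl) (p : ℕ → List ℕ) : Prop :=
  (∀ i, f (p i) ≠ none) ∧ (∀ i, ∃ n : ℕ, p (i + 1) = p i ++ [n])

/-- Atomic formulas with an inductive predicate. -/
def isIndAtom (φ : Fm) : Prop :=
  (∃ a b c, φ = Fm.add1 a b c) ∨ (∃ a b c, φ = Fm.add2 a b c)

/-- A progressing trace step: the traced formula is the principal formula of a
    case rule and its successor (in the corresponding case distinction, child `j`)
    is a case-descendant. -/
def progStep : Rule → ℕ → Fm → Fm → Prop := fun r j τ τ' =>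
  match r with
  | .caseAdd1 a b c x y z =>
      τ = Fm.add1 a b c ∧ j = 1 ∧ τ' = Fm.add1 (.var x) (.var y) (.var z)
  | .caseAdd2 a b c x y z =>
      τ = Fm.add2 a b c ∧ j = 1 ∧ τ' = Fm.add2 (.var x) (.s (.var y)) (.var z)
  | _ => False

/-- The trace connection relation between the traced formula at a conclusion of a
    rule `r` and the traced formula at its `j`-th premise. -/
def connStep : Rule → ℕ → Fm → Fm → Prop := fun r j τ τ' =>
  match r with
  | .subst θ => τ = Fm.subst θ τ'
  | .eqL v1 v2 t u =>
      ∃ F : Fm, τ = Fm.subst (sub2 v1 v2 t u) F ∧ τ' = Fm.subst (sub2 v1 v2 u t) F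
  | .eqLa v1 v2 t u =>
      ∃ F : Fm, τ = Fm.subst (sub2 v1 v2 t u) F ∧ τ' = Fm.subst (sub2 v1 v2 u t) F
  | .caseAdd1 a b c x y z => τ' = τ ∨ progStep (.caseAdd1 a b c x y z) j τ τ'
  | .caseAdd2 a b c x y z => τ' = τ ∨ progStep (.caseAdd2 a b c x y z) j τ τ'
  | _ => τ' = τ

/-- `τ` is a trace following the tail from `k` of the path `p` in `f`. -/
def IsTraceFrom (f : Lbl) (p : ℕ → List ℕ) (k : ℕ) (τ : ℕ → Fm) : Prop :=
  ∀ i, k ≤ i →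
    ∃ (S : Seq) (r : Rule) (j : ℕ), f (p i) = some (S, r) ∧ τ i ∈ S.ant ∧ isIndAtom (τ i) ∧
      p (i + 1) = p i ++ [j] ∧ connStep r j (τ i) (τ (i + 1))

/-- The trace `τ` progresses at position `i` of the path `p`. -/
def progAt (f : Lbl) (p : ℕ → List ℕ) (τ : ℕ → Fm) (i : ℕ) : Prop :=
  ∃ (S : Seq) (r : Rule) (j : ℕ), f (p i) = some (S, r) ∧ p (i + 1) = p i ++ [j] ∧
    progStep r j (τ i) (τ (i + 1))

/-- The global trace condition for a (possibly infinite) labeling `f`. -/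
def GTC (f : Lbl) : Prop :=
  ∀ p : ℕ → List ℕ, IsInfPath f p →
    ∃ (k : ℕ) (τ : ℕ → Fm), IsTraceFrom f p k τ ∧
      ∀ n : ℕ, ∃ i, n ≤ i ∧ k ≤ i ∧ progAt f p τ i

/-- A pre-proof is a proof when its tree-unfolding satisfies the
    global trace condition. -/
def PreProof.IsProof (P : PreProof) : Prop := ∃ T : Lbl, IsUnfolding P T ∧ GTC T

/-- Some rule satisfying `Q` occurs in the labeling `f`. -/
def usesRule (f : Lbl) (Q : Rule → Prop) : Prop := ∃ σ S r, f σ = some (S, r) ∧ Q r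

/-- No occurrence of (Cut). -/
def PreProof.CutFree (P : PreProof) : Prop :=
  ¬ usesRule P.D.label (fun r => ∃ φ, r = Rule.cut φ)

/-- No occurrence of (= L_a): the pre-proof is a `CLKID^ω` pre-proof. -/
def PreProof.NoEqLa (P : PreProof) : Prop :=
  ¬ usesRule P.D.label (fun r => ∃ v1 v2 t u, r = Rule.eqLa v1 v2 t u)

/-- No occurrence of (= L): the pre-proof is a `CLKID^ω_a` pre-proof. -/
def PreProof.NoEqL (P : PreProof) : Prop :=
  ¬ usesRule P.D.label (fun r => ∃ v1 v2 t u, r = Rule.eqL v1 v2 t u)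

/-- The conclusion of the pre-proof is the sequent `S`. -/
def PreProof.Concl (P : PreProof) (S : Seq) : Prop := ∃ r, P.D.label [] = some (S, r)

/-- Provability in `CLKID^ω`. -/
def ProvableW (S : Seq) : Prop :=
  ∃ P : PreProof, P.IsProof ∧ P.NoEqLa ∧ P.Concl S

/-- Provability in `CLKID^ω_a`. -/
def ProvableWa (S : Seq) : Prop :=
  ∃ P : PreProof, P.IsProof ∧ P.NoEqL ∧ P.Concl S

/-- Cut-free provability in `CLKID^ω`. -/
def CutFreeProvableW (S : Seq) : Prop :=
  ∃ P : PreProof, P.IsProof ∧ P.CutFree ∧ P.NoEqLa ∧ P.Concl S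

/-- The sequent `Add2(x, y, z) ⊢ Add1(x, y, z)`. -/
def goalSeq : Seq :=
  ⟨{Fm.add2 (Tm.var 0) (Tm.var 1) (Tm.var 2)}, {Fm.add1 (Tm.var 0) (Tm.var 1) (Tm.var 2)}⟩

/-- A cut-free cycle-normal `CLKID^ω_a` proof of `Add2(x,y,z) ⊢ Add1(x,y,z)`. -/
def IsCNProofOfGoal (P : PreProof) : Prop :=
  P.IsProof ∧ P.CutFree ∧ P.NoEqL ∧ P.CycleNormal ∧ P.Concl goalSeq

/-- The index of an `Add2` atom with second argument `b` in the sequent `S` is `⊥`. -/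
def IndexBot (S : Seq) (b : Tm) : Prop :=
  ∀ a' b' c', Fm.add1 a' b' c' ∈ S.suc → ¬ DepTm (antSet S) b b'

/-- `σ` is a switching point of `f`: the conclusion of a `(Case Add2)` rule whose
    principal formula has index `⊥`. -/
def SwitchingPoint (f : Lbl) (σ : List ℕ) : Prop :=
  ∃ S a b c x y z, f σ = some (S, Rule.caseAdd2 a b c x y z) ∧ IndexBot S b

/-- `σ` is the conclusion of a `(Case Add2)` rule in `f`. -/
def CaseAdd2At (f : Lbl) (σ : List ℕ) : Prop :=
  ∃ S a b c x y z, f σ = some (S, Rule.caseAdd2 a b c x y z)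

/-- The node `σ` of `f` is labeled with an index sequent. -/
def IndexSequentAt (f : Lbl) (σ : List ℕ) : Prop :=
  ∃ S r, f σ = some (S, r) ∧ IndexSequent S

/-- A finite index path `p 0, …, p N` in `f`:  its first sequent is an index
    sequent, and a step to the left premise (child `0`) of a `(Case Add2)` rule
    only happens at switching points. -/
def IsIndexPathUpTo (f : Lbl) (p : ℕ → List ℕ) (N : ℕ) : Prop :=
  (∀ i, i ≤ N → f (p i) ≠ none) ∧
  (∀ i, i < N → ∃ n : ℕ, p (i + 1) = p i ++ [n]) ∧
  IndexSequentAt f (p 0) ∧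
  (∀ i, i < N → CaseAdd2At f (p i) → p (i + 1) = p i ++ [0] → SwitchingPoint f (p i))

/-- An infinite index path in `f`. -/
def IsInfIndexPath (f : Lbl) (p : ℕ → List ℕ) : Prop :=
  IsInfPath f p ∧
  IndexSequentAt f (p 0) ∧
  (∀ i, CaseAdd2At f (p i) → p (i + 1) = p i ++ [0] → SwitchingPoint f (p i))

/-- The child index chosen by the rightmost path: the right assumption of
    `(Case Add2)`, the unique premise otherwise. -/
def rightIdx : Rule → ℕ := fun r =>
  match r with
  | .caseAdd2 _ _ _ _ _ _ => 1
  | _ => 0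

/-- One step of the rightmost path in `f`. -/
def RightStep (f : Lbl) (σ σ' : List ℕ) : Prop :=
  ∃ S r, f σ = some (S, r) ∧ σ' = σ ++ [rightIdx r] ∧ f σ' ≠ none

/-- `A(Γ ⊢ Δ)` of Lemma `abc_relations`. -/
def Aset (S : Seq) : Set Tm :=
  {a | (∃ b c, Fm.add2 a b c ∈ S.ant) ∨ (∃ b c, Fm.add1 a b c ∈ S.suc) ∨ a = Tm.zero}

/-- `BC(Γ ⊢ Δ)` of Lemma `abc_relations`. -/
def BCset (S : Seq) : Set Tm :=
  {t | (∃ a c, Fm.add2 a t c ∈ S.ant) ∨ (∃ a b, Fm.add2 a b t ∈ S.ant) ∨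
       (∃ a c, Fm.add1 a t c ∈ S.suc) ∨ (∃ a b, Fm.add1 a b t ∈ S.suc)}

/-- The rules that can occur in a cut-free cycle-normal `CLKID^ω_a` proof of
    `Add2(x,y,z) ⊢ Add1(x,y,z)` (plus bud labels). -/
def allowedRule (r : Rule) : Prop :=
  r = Rule.bud ∨ r = Rule.weak ∨ (∃ θ, r = Rule.subst θ) ∨
  (∃ v1 v2 t u, r = Rule.eqLa v1 v2 t u) ∨
  (∃ a b c x y z, r = Rule.caseAdd2 a b c x y z) ∨
  r = Rule.add1R1 ∨ (∃ a b c, r = Rule.add1R2 a b c)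


section CN
open Classical in
/-- Resolve a bud to its companion. -/
noncomputable def res (P : PreProof) (σ : List ℕ) : List ℕ :=
  if budAt P.D.label σ then P.C σ else σ

open Classical in
/-- Follow a child path through the cycle graph, starting at node `ν`. -/
noncomputable def gpath (P : PreProof) : List ℕ → List ℕ → Option (List ℕ)
  | ν, [] => some ν
  | ν, i :: τ =>
      if P.D.label (ν ++ [i]) = none then none else gpath P (res P (ν ++ [i])) τ

/-- The node of `P.D` generating position `τ` of the unfolding. -/
noncomputable def gP (P : PreProof) (τ : List ℕ) : Option (List ℕ) :=
  gpath P (res P []) τ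

/-- The canonical unfolding of `P`. -/
noncomputable def unf (P : PreProof) : Lbl := fun τ => (gP P τ).bind P.D.label

/-- An inner node: in the tree and not a bud. -/
def Inner (P : PreProof) (ν : List ℕ) : Prop :=
  P.D.label ν ≠ none ∧ ¬ budAt P.D.label ν

variable {P : PreProof}

lemma bud_no_desc {σ τ : List ℕ} {S : Seq} (h : P.D.label σ = some (S, Rule.bud))
    (hτ : τ ≠ []) : P.D.label (σ ++ τ) = none := by
  obtain ⟨i, τ', rfl⟩ : ∃ i τ', τ = i :: τ' := by
    cases τ with
    | nil => exact absurd rfl hτ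
    | cons i τ' => exact ⟨i, τ', rfl⟩
  by_contra hne
  have h1 : P.D.label (σ ++ [i]) ≠ none := by
    apply P.D.prefix_closed
    simpa [List.append_assoc] using hne
  rcases P.D.wf σ S Rule.bud h with ⟨_, hch⟩ | ⟨hne', _⟩
  · exact h1 (hch i)
  · exact hne' rfl

lemma not_bud_of_proper_prefix {σ ρ : List ℕ} (h : P.D.label σ ≠ none)
    (hp : ρ <+: σ) (hne : ρ ≠ σ) : ¬ budAt P.D.label ρ := by
  rintro ⟨S, hS⟩
  obtain ⟨τ, rfl⟩ := hp
  have hτ : τ ≠ [] := by rintro rfl; exact hne (by simp)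
  exact h (bud_no_desc hS hτ)

lemma inner_res {σ : List ℕ} (h : P.D.label σ ≠ none) : Inner P (res P σ) := by
  unfold res
  split
  · next hb =>
    obtain ⟨S, hS⟩ := hb
    obtain ⟨r, hr, hrb⟩ := P.comp σ S hS
    exact ⟨by simp [hr], by rintro ⟨S', hS'⟩; rw [hr] at hS'; simp_all⟩
  · next hb => exact ⟨h, hb⟩

lemma res_eq_self {σ : List ℕ} (h : ¬ budAt P.D.label σ) : res P σ = σ := if_neg h

lemma res_eq_comp {σ : List ℕ} (h : budAt P.D.label σ) : res P σ = P.C σ := if_pos h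

lemma gpath_append (P : PreProof) (ν τ₁ τ₂ : List ℕ) :
    gpath P ν (τ₁ ++ τ₂) = (gpath P ν τ₁).bind (fun ν' => gpath P ν' τ₂) := by
  induction τ₁ generalizing ν with
  | nil => simp [gpath]
  | cons i τ₁ ih =>
    rw [List.cons_append]
    by_cases h : P.D.label (ν ++ [i]) = none
    · simp [gpath, h]
    · simp only [gpath, if_neg h]
      exact ih _

lemma gP_append (P : PreProof) (τ₁ τ₂ : List ℕ) :
    gP P (τ₁ ++ τ₂) = (gP P τ₁).bind (fun ν' => gpath P ν' τ₂) :=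
  gpath_append P _ τ₁ τ₂

lemma gpath_inner {ν μ τ : List ℕ} (hν : Inner P ν) (h : gpath P ν τ = some μ) :
    Inner P μ := by
  induction τ generalizing ν with
  | nil => simp [gpath] at h; rwa [← h]
  | cons i τ ih =>
    unfold gpath at h
    split at h
    · exact absurd h (by simp)
    · next hne => exact ih (inner_res hne) h

lemma inner_root (P : PreProof) : Inner P (res P []) := inner_res P.D.root_def

lemma gP_inner {μ τ : List ℕ} (h : gP P τ = some μ) : Inner P μ :=
  gpath_inner (inner_root P) h

lemma gpath_of_label {τ : List ℕ} : ∀ {ν : List ℕ}, Inner P ν →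
    P.D.label (ν ++ τ) ≠ none → gpath P ν τ = some (res P (ν ++ τ)) := by
  induction τ with
  | nil =>
    intro ν hν h
    simp [gpath, res_eq_self hν.2]
  | cons i τ ih =>
    intro ν hν h
    have h1 : P.D.label (ν ++ [i]) ≠ none := by
      apply P.D.prefix_closed
      simpa [List.append_assoc] using h
    unfold gpath
    rw [if_neg h1]
    cases τ with
    | nil =>
      simp [gpath]
    | cons j τ' =>
      have hnb : ¬ budAt P.D.label (ν ++ [i]) := by
        rintro ⟨S, hS⟩
        exact h (by simpa [List.append_assoc] using bud_no_desc hS (τ := j :: τ') (by simp))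
      rw [res_eq_self hnb]
      have := ih (ν := ν ++ [i]) ⟨h1, hnb⟩ (by simpa [List.append_assoc] using h)
      rw [this]
      simp [List.append_assoc]

lemma gP_of_label {σ : List ℕ} (h : P.D.label σ ≠ none) : gP P σ = some (res P σ) := by
  unfold gP
  by_cases hb : budAt P.D.label []
  · obtain ⟨S, hS⟩ := hb
    have hσ : σ = [] := by
      by_contra hne
      exact h (by simpa using bud_no_desc hS (τ := σ) hne)
    subst hσ
    simp [gpath, res_eq_comp ⟨S, hS⟩]
  · rw [res_eq_self hb]
    simpa using gpath_of_label (ν := []) ⟨P.D.root_def, hb⟩ (by simpa using h)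

lemma label_of_gpath {τ : List ℕ} : ∀ {ν : List ℕ}, Inner P ν →
    (∀ τ', τ' <+: τ → τ' ≠ [] → ¬ budAt P.D.label (ν ++ τ')) →
    gpath P ν τ ≠ none → P.D.label (ν ++ τ) ≠ none := by
  induction τ with
  | nil => intro ν hν _ _; simpa using hν.1
  | cons i τ ih =>
    intro ν hν hnb h
    have h1 : P.D.label (ν ++ [i]) ≠ none := by
      intro hc
      apply h
      unfold gpath
      rw [if_pos hc]
    have hnb1 : ¬ budAt P.D.label (ν ++ [i]) := hnb [i] ⟨τ, rfl⟩ (by simp)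
    have h2 : gpath P (ν ++ [i]) τ ≠ none := by
      intro hc
      apply h
      unfold gpath
      rw [if_neg h1, res_eq_self hnb1]
      exact hc
    have := ih (ν := ν ++ [i]) ⟨h1, hnb1⟩ (fun τ' hp hne => by
      have : (i :: τ') <+: (i :: τ) := by
        obtain ⟨w, rfl⟩ := hp
        exact ⟨w, rfl⟩
      simpa [List.append_assoc] using hnb (i :: τ') this (by simp)) h2
    simpa [List.append_assoc] using this

lemma label_of_gP {σ : List ℕ} (hnb : ∀ ρ, ρ <+: σ → ¬ budAt P.D.label ρ)
    (h : gP P σ ≠ none) : P.D.label σ ≠ none := by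
  have hr : ¬ budAt P.D.label [] := hnb [] (by simp)
  unfold gP at h
  rw [res_eq_self hr] at h
  simpa using label_of_gpath (ν := []) ⟨P.D.root_def, hr⟩
    (fun τ' hp _ => by simpa using hnb τ' (by simpa using hp)) h

lemma inner_comp {σ : List ℕ} (hb : budAt P.D.label σ) : Inner P (P.C σ) := by
  obtain ⟨S, hS⟩ := hb
  obtain ⟨r, hr, hrb⟩ := P.comp σ S hS
  exact ⟨by simp [hr], by rintro ⟨S', hS'⟩; rw [hr] at hS'; simp_all⟩

lemma unf_eq_label {σ : List ℕ} (h : P.D.label σ ≠ none) (hb : ¬ budAt P.D.label σ) :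
    unf P σ = P.D.label σ := by
  unfold unf
  rw [gP_of_label h, res_eq_self hb, Option.bind_some]

lemma unf_bud_shift {σ₁ : List ℕ} (hb : budAt P.D.label σ₁) (σ₂ : List ℕ) :
    unf P (σ₁ ++ σ₂) = unf P (P.C σ₁ ++ σ₂) := by
  have h1 : P.D.label σ₁ ≠ none := by obtain ⟨S, hS⟩ := hb; simp [hS]
  have hC : Inner P (P.C σ₁) := inner_comp hb
  unfold unf
  rw [gP_append, gP_append, gP_of_label h1, gP_of_label hC.1,
    res_eq_comp hb, res_eq_self hC.2]

lemma unf_none {σ : List ℕ} (h : P.D.label σ = none)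
    (hnb : ∀ ρ, ρ <+: σ → ¬ budAt P.D.label ρ) : unf P σ = none := by
  unfold unf
  cases hg : gP P σ with
  | none => rfl
  | some ν => exact absurd (label_of_gP hnb (by simp [hg])) (by simp [h])

lemma isUnfolding_unf (P : PreProof) : IsUnfolding P (unf P) :=
  ⟨fun _ h hb => unf_eq_label h hb, fun _ σ₂ hb => unf_bud_shift hb σ₂,
    fun _ h hnb => unf_none h hnb⟩

lemma unfolding_unique {Q : PreProof} {T T' : Lbl}
    (hT : IsUnfolding Q T) (hT' : IsUnfolding Q T') : T = T' := by
  have key : ∀ n σ₁ σ₂, budAt Q.D.label σ₁ → σ₂.length = n →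
      T (σ₁ ++ σ₂) = T' (σ₁ ++ σ₂) := by
    intro n
    induction n using Nat.strong_induction_on with
    | _ n ih =>
      intro σ₁ σ₂ hb hlen
      rw [hT.2.1 σ₁ σ₂ hb, hT'.2.1 σ₁ σ₂ hb]
      have hInner : Inner Q (Q.C σ₁) := inner_comp hb
      set ρ := Q.C σ₁ with hρ
      by_cases hbp : ∃ π, π <+: ρ ++ σ₂ ∧ budAt Q.D.label π
      · obtain ⟨π, hπp, hπb⟩ := hbp
        have hρπ : ρ <+: π := by
          rcases List.prefix_or_prefix_of_prefix hπp (List.prefix_append ρ σ₂) with h | h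
          · by_cases he : π = ρ
            · exact absurd hπb (he ▸ hInner.2)
            · exact absurd hπb (not_bud_of_proper_prefix hInner.1 h he)
          · exact h
        obtain ⟨δ, rfl⟩ := hρπ
        have hδ : δ ≠ [] := by rintro rfl; exact hInner.2 (by simpa using hπb)
        obtain ⟨ω, hω⟩ := hπp
        rw [List.append_assoc] at hω
        have hσ₂ : σ₂ = δ ++ ω := (List.append_cancel_left hω).symm
        have hlt : ω.length < n := by
          subst hσ₂
          rw [← hlen, List.length_append]
          cases δ with
          | nil => exact absurd rfl hδ
          | cons a l => simp
        have := ih ω.length hlt (ρ ++ δ) ω hπb rfl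
        rw [hσ₂, ← List.append_assoc]
        exact this
      · push_neg at hbp
        by_cases hl : Q.D.label (ρ ++ σ₂) = none
        · rw [hT.2.2 _ hl (fun π hp => hbp π hp), hT'.2.2 _ hl (fun π hp => hbp π hp)]
        · rw [hT.1 _ hl (hbp _ (List.prefix_refl _)), hT'.1 _ hl (hbp _ (List.prefix_refl _))]
  funext σ
  by_cases hbp : ∃ σ₁, σ₁ <+: σ ∧ budAt Q.D.label σ₁
  · obtain ⟨σ₁, ⟨σ₂, rfl⟩, hb⟩ := hbp
    exact key σ₂.length σ₁ σ₂ hb rfl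
  · push_neg at hbp
    by_cases hl : Q.D.label σ = none
    · rw [hT.2.2 σ hl hbp, hT'.2.2 σ hl hbp]
    · rw [hT.1 σ hl (hbp σ (List.prefix_refl σ)), hT'.1 σ hl (hbp σ (List.prefix_refl σ))]

end CN

section CN2

lemma prefix_antisymm' {α : Type*} {l₁ l₂ : List α} (h₁ : l₁ <+: l₂) (h₂ : l₂ <+: l₁) :
    l₁ = l₂ :=
  h₁.eq_of_length (le_antisymm h₁.length_le h₂.length_le)

lemma finite_bdd (M : ℕ) : ∀ N : ℕ, {l : List ℕ | l.length ≤ N ∧ ∀ x ∈ l, x ≤ M}.Finite := by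
  intro N
  induction N with
  | zero =>
    apply Set.Finite.subset (Set.finite_singleton ([] : List ℕ))
    rintro l ⟨hl, -⟩
    simp_all [List.length_eq_zero_iff]
  | succ N ih =>
    apply Set.Finite.subset
      (Set.Finite.insert [] ((Set.finite_Icc 0 M).biUnion (fun i _ => ih.image (List.cons i))))
    rintro l ⟨hl, hx⟩
    cases l with
    | nil => exact Set.mem_insert _ _
    | cons a l' =>
      apply Set.mem_insert_of_mem
      refine Set.mem_biUnion (Set.mem_Icc.mpr ⟨Nat.zero_le a, hx a (by simp)⟩) ?_
      exact Set.mem_image_of_mem _ ⟨by simpa using hl, fun x hx' => hx x (by simp [hx'])⟩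

/-- All prefixes of `τ` have pairwise distinct images under `gP P`. -/
def Inj (P : PreProof) (τ : List ℕ) : Prop :=
  ∀ ρ₁ ρ₂, ρ₁ <+: τ → ρ₂ <+: τ → gP P ρ₁ = gP P ρ₂ → ρ₁ = ρ₂

/-- All proper prefixes of `τ` have pairwise distinct images under `gP P`. -/
def InjP (P : PreProof) (τ : List ℕ) : Prop :=
  ∀ ρ₁ ρ₂, ρ₁ <+: τ → ρ₂ <+: τ → ρ₁ ≠ τ → ρ₂ ≠ τ → gP P ρ₁ = gP P ρ₂ → ρ₁ = ρ₂

open Classical in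
/-- The label function of the cycle-normal pre-proof. -/
noncomputable def label' (P : PreProof) : Lbl := fun τ =>
  if gP P τ = none then none
  else if Inj P τ then unf P τ
  else if InjP P τ then (unf P τ).map (fun p => (p.1, Rule.bud))
  else none

open Classical in
/-- The companion function of the cycle-normal pre-proof. -/
noncomputable def comp' (P : PreProof) (τ : List ℕ) : List ℕ :=
  if h : ∃ ρ, ρ <+: τ ∧ ρ ≠ τ ∧ gP P ρ = gP P τ then h.choose else []

variable {P : PreProof}

lemma Inj.injP {τ : List ℕ} (h : Inj P τ) : InjP P τ :=
  fun ρ₁ ρ₂ h₁ h₂ _ _ hg => h ρ₁ ρ₂ h₁ h₂ hg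

lemma Inj.of_prefix {τ ρ : List ℕ} (h : Inj P τ) (hp : ρ <+: τ) : Inj P ρ :=
  fun ρ₁ ρ₂ h₁ h₂ hg => h ρ₁ ρ₂ (h₁.trans hp) (h₂.trans hp) hg

lemma InjP.inj_of_proper {τ ρ : List ℕ} (h : InjP P τ) (hp : ρ <+: τ) (hne : ρ ≠ τ) :
    Inj P ρ := by
  intro ρ₁ ρ₂ h₁ h₂ hg
  refine h ρ₁ ρ₂ (h₁.trans hp) (h₂.trans hp) ?_ ?_ hg
  · rintro rfl; exact hne (prefix_antisymm' hp h₁)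
  · rintro rfl; exact hne (prefix_antisymm' hp h₂)

lemma InjP.of_proper_prefix {τ ρ : List ℕ} (h : InjP P τ) (hp : ρ <+: τ) (hne : ρ ≠ τ) :
    InjP P ρ := (h.inj_of_proper hp hne).injP

lemma proper_prefix_of_snoc {τ ρ : List ℕ} {i : ℕ} (hp : ρ <+: τ ++ [i]) (hne : ρ ≠ τ ++ [i]) :
    ρ <+: τ := by
  rcases List.prefix_or_prefix_of_prefix hp (List.prefix_refl (τ ++ [i])) with h | h
  · by_cases hl : ρ.length ≤ τ.length
    · exact List.prefix_of_prefix_length_le hp (List.prefix_append τ [i]) hl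
    · exfalso
      apply hne
      apply hp.eq_of_length
      have := hp.length_le
      simp at this ⊢
      omega
  · exact absurd (prefix_antisymm' hp h) hne

lemma label'_ne_none_iff {τ : List ℕ} :
    label' P τ ≠ none ↔ gP P τ ≠ none ∧ InjP P τ := by
  classical
  unfold label'
  constructor
  · intro h
    by_cases hg : gP P τ = none
    · simp [hg] at h
    · refine ⟨hg, ?_⟩
      by_cases hI : Inj P τ
      · exact hI.injP
      · by_cases hIP : InjP P τ
        · exact hIP
        · simp [hg, hI, hIP] at h
  · rintro ⟨hg, hIP⟩
    obtain ⟨ν, hν⟩ := Option.ne_none_iff_exists'.mp hg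
    have hν' : P.D.label ν ≠ none := (gP_inner hν).1
    obtain ⟨x, hx⟩ := Option.ne_none_iff_exists'.mp hν'
    have hu : unf P τ = some x := by unfold unf; rw [hν, Option.bind_some, hx]
    by_cases hI : Inj P τ <;> simp [hg, hI, hIP, hu]

lemma label'_inner {τ ν : List ℕ} (hg : gP P τ = some ν) (hI : Inj P τ) :
    label' P τ = P.D.label ν := by
  classical
  unfold label'
  rw [if_neg (by simp [hg]), if_pos hI]
  unfold unf
  rw [hg, Option.bind_some]

lemma label'_bud {τ ν : List ℕ} {S : Seq} {r : Rule} (hg : gP P τ = some ν)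
    (hI : ¬ Inj P τ) (hIP : InjP P τ) (hν : P.D.label ν = some (S, r)) :
    label' P τ = some (S, Rule.bud) := by
  classical
  unfold label'
  rw [if_neg (by simp [hg]), if_neg hI, if_pos hIP]
  unfold unf
  rw [hg, Option.bind_some, hν, Option.map_some]

end CN2

section CN3
variable {P : PreProof}

lemma gP_nil : gP P [] = some (res P []) := rfl

lemma gP_prefix_ne_none {τ ρ : List ℕ} (h : gP P τ ≠ none) (hp : ρ <+: τ) :
    gP P ρ ≠ none := by
  obtain ⟨w, rfl⟩ := hp
  rw [gP_append] at h
  intro hc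
  rw [hc] at h
  exact h rfl

lemma label'_some_cases {σ : List ℕ} {S : Seq} {r : Rule} (h : label' P σ = some (S, r)) :
    ∃ ν r₀, gP P σ = some ν ∧ InjP P σ ∧ P.D.label ν = some (S, r₀) ∧ r₀ ≠ Rule.bud ∧
      ((Inj P σ ∧ r = r₀) ∨ (¬ Inj P σ ∧ r = Rule.bud)) := by
  have hne : label' P σ ≠ none := by simp [h]
  obtain ⟨hg, hIP⟩ := label'_ne_none_iff.mp hne
  obtain ⟨ν, hν⟩ := Option.ne_none_iff_exists'.mp hg
  have hInner := gP_inner hν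
  obtain ⟨⟨S₀, r₀⟩, hl₀⟩ := Option.ne_none_iff_exists'.mp hInner.1
  have hr₀ : r₀ ≠ Rule.bud := fun hb => hInner.2 ⟨S₀, by rw [hl₀, hb]⟩
  by_cases hI : Inj P σ
  · have hh := label'_inner hν hI
    rw [h, hl₀] at hh
    obtain ⟨hS, hr⟩ : S = S₀ ∧ r = r₀ := by
      injection hh with hh'; exact ⟨congrArg Prod.fst hh', congrArg Prod.snd hh'⟩
    exact ⟨ν, r₀, hν, hIP, by rw [hl₀, hS], hr₀, Or.inl ⟨hI, hr⟩⟩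
  · have hh := label'_bud hν hI hIP hl₀
    rw [h] at hh
    obtain ⟨hS, hr⟩ : S = S₀ ∧ r = Rule.bud := by
      injection hh with hh'
      exact ⟨congrArg Prod.fst hh', congrArg Prod.snd hh'⟩
    exact ⟨ν, r₀, hν, hIP, by rw [hl₀, hS], hr₀, Or.inr ⟨hI, hr⟩⟩

lemma exists_companion {σ : List ℕ} {S : Seq} (h : label' P σ = some (S, Rule.bud)) :
    ∃ ρ, ρ <+: σ ∧ ρ ≠ σ ∧ gP P ρ = gP P σ := by
  obtain ⟨ν, r₀, hν, hIP, hl₀, hr₀, hcases⟩ := label'_some_cases h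
  rcases hcases with ⟨_, hr⟩ | ⟨hI, _⟩
  · exact absurd hr.symm hr₀
  · unfold Inj at hI
    push_neg at hI
    obtain ⟨ρ₁, ρ₂, h₁, h₂, hgg, hne⟩ := hI
    by_cases he₁ : ρ₁ = σ
    · subst he₁
      exact ⟨ρ₂, h₂, fun hc => hne hc.symm, hgg.symm⟩
    · by_cases he₂ : ρ₂ = σ
      · subst he₂
        exact ⟨ρ₁, h₁, he₁, hgg⟩
      · exact absurd (hIP ρ₁ ρ₂ h₁ h₂ he₁ he₂ hgg) hne

lemma comp'_spec {σ : List ℕ} {S : Seq} (h : label' P σ = some (S, Rule.bud)) :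
    comp' P σ <+: σ ∧ comp' P σ ≠ σ ∧ gP P (comp' P σ) = gP P σ := by
  classical
  have hex := exists_companion h
  unfold comp'
  rw [dif_pos hex]
  exact hex.choose_spec

/-- The derivation tree of the cycle-normal pre-proof. -/
noncomputable def DT' (P : PreProof) : DTree where
  label := label' P
  root_def := by
    have hI : Inj P [] := by
      intro ρ₁ ρ₂ h₁ h₂ _
      rw [List.prefix_nil.mp h₁, List.prefix_nil.mp h₂]
    rw [label'_inner gP_nil hI]
    exact (inner_root P).1
  prefix_closed := by
    intro σ τ h
    obtain ⟨hg, hIP⟩ := label'_ne_none_iff.mp h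
    refine label'_ne_none_iff.mpr ⟨gP_prefix_ne_none hg (List.prefix_append σ τ), ?_⟩
    intro ρ₁ ρ₂ h₁ h₂ hne₁ hne₂ hgg
    refine hIP ρ₁ ρ₂ (h₁.trans (List.prefix_append σ τ)) (h₂.trans (List.prefix_append σ τ))
      ?_ ?_ hgg
    · intro he
      rw [he] at h₁ hne₁
      have hl := h₁.length_le
      rw [List.length_append] at hl
      have hτ : τ = [] := List.length_eq_zero_iff.mp (by omega)
      exact hne₁ (by simp [hτ])
    · intro he
      rw [he] at h₂ hne₂
      have hl := h₂.length_le
      rw [List.length_append] at hl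
      have hτ : τ = [] := List.length_eq_zero_iff.mp (by omega)
      exact hne₂ (by simp [hτ])
  wf := by
    classical
    intro τ S r h
    obtain ⟨ν, r₀, hν, hIP, hl₀, hr₀, hcases⟩ := label'_some_cases h
    rcases hcases with ⟨hI, hr⟩ | ⟨hI, hr⟩
    · subst hr
      right
      refine ⟨hr₀, ?_⟩
      rcases P.D.wf ν S r hl₀ with ⟨hb, _⟩ | ⟨_, prems, hinf, hch⟩
      · exact absurd hb hr₀
      refine ⟨prems, hinf, ?_, ?_⟩
      · intro i
        obtain ⟨r_i, hri⟩ := hch.1 i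
        have hgi : gP P (τ ++ [(i : ℕ)]) = some (res P (ν ++ [(i : ℕ)])) := by
          rw [gP_append, hν, Option.bind_some]
          unfold gpath
          rw [if_neg (by simp [hri])]
          rfl
        have hSi : ∃ r', P.D.label (res P (ν ++ [(i : ℕ)])) = some (prems.get i, r') := by
          by_cases hb : budAt P.D.label (ν ++ [(i : ℕ)])
          · rw [res_eq_comp hb]
            obtain ⟨Sb, hSb⟩ := hb
            have hSbe : Sb = prems.get i := by
              rw [hri] at hSb
              injection hSb with hh
              exact (congrArg Prod.fst hh).symm
            obtain ⟨r', hr', _⟩ := P.comp _ Sb hSb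
            exact ⟨r', by rw [hr', hSbe]⟩
          · rw [res_eq_self hb]
            exact ⟨r_i, hri⟩
        obtain ⟨r', hr'⟩ := hSi
        have hIP' : InjP P (τ ++ [(i : ℕ)]) := by
          intro ρ₁ ρ₂ h₁ h₂ hne₁ hne₂ hgg
          exact hI ρ₁ ρ₂ (proper_prefix_of_snoc h₁ hne₁) (proper_prefix_of_snoc h₂ hne₂) hgg
        by_cases hI' : Inj P (τ ++ [(i : ℕ)])
        · exact ⟨r', by rw [label'_inner hgi hI', hr']⟩
        · exact ⟨Rule.bud, label'_bud hgi hI' hIP' hr'⟩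
      · intro i hi
        have hnone := hch.2 i hi
        have hg0 : gP P (τ ++ [i]) = none := by
          rw [gP_append, hν, Option.bind_some]
          unfold gpath
          rw [if_pos hnone]
        unfold label'
        rw [if_pos hg0]
    · subst hr
      left
      refine ⟨rfl, ?_⟩
      intro i
      unfold Inj at hI
      push_neg at hI
      obtain ⟨ρ₁, ρ₂, h₁, h₂, hgg, hne⟩ := hI
      have hproper : ∀ ρ, ρ <+: τ → ρ ≠ τ ++ [i] := by
        intro ρ hp he
        rw [he] at hp
        have := hp.length_le
        simp at this
      have hNIP : ¬ InjP P (τ ++ [i]) := by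
        intro hIP'
        exact hne (hIP' ρ₁ ρ₂ (h₁.trans (List.prefix_append τ [i]))
          (h₂.trans (List.prefix_append τ [i])) (hproper ρ₁ h₁) (hproper ρ₂ h₂) hgg)
      by_contra hc
      exact hNIP (label'_ne_none_iff.mp hc).2

/-- Finiteness of the new tree. -/
lemma fin' (P : PreProof) : {σ : List ℕ | label' P σ ≠ none}.Finite := by
  classical
  have hE : {σ : List ℕ | P.D.label σ ≠ none}.Finite := P.fin
  haveI : Finite ↥{σ : List ℕ | P.D.label σ ≠ none} := hE.to_subtype
  set N := Nat.card ↥{σ : List ℕ | P.D.label σ ≠ none} with hN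
  have hA : (⋃ σ ∈ {σ : List ℕ | P.D.label σ ≠ none}, {x | x ∈ σ}).Finite :=
    hE.biUnion (fun σ _ => σ.finite_toSet)
  obtain ⟨M, hM⟩ := hA.bddAbove
  apply Set.Finite.subset (finite_bdd M N)
  intro τ hτ
  obtain ⟨hg, hIP⟩ := label'_ne_none_iff.mp hτ
  constructor
  · -- length bound
    have hf : ∀ k : Fin τ.length, ∃ ν, gP P (τ.take (k : ℕ)) = some ν ∧ P.D.label ν ≠ none := by
      intro k
      have := gP_prefix_ne_none hg (List.take_prefix (k : ℕ) τ)
      obtain ⟨ν, hν⟩ := Option.ne_none_iff_exists'.mp this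
      exact ⟨ν, hν, (gP_inner hν).1⟩
    choose f hf1 hf2 using hf
    have hinj : Function.Injective
        (fun k : Fin τ.length => (⟨f k, hf2 k⟩ : ↥{σ : List ℕ | P.D.label σ ≠ none})) := by
      intro k₁ k₂ he
      simp only [Subtype.mk.injEq] at he
      have htake : τ.take (k₁ : ℕ) = τ.take (k₂ : ℕ) := by
        refine hIP _ _ (List.take_prefix _ τ) (List.take_prefix _ τ) ?_ ?_ ?_
        · intro hc
          have := congrArg List.length hc
          simp at this
          omega
        · intro hc
          have := congrArg List.length hc
          simp at this
          omega
        · rw [hf1 k₁, hf1 k₂, he]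
      have := congrArg List.length htake
      simp at this
      exact Fin.ext (by omega)
    have := Nat.card_le_card_of_injective _ hinj
    rw [Nat.card_eq_fintype_card, Fintype.card_fin] at this
    exact this
  · -- entry bound
    intro x hx
    obtain ⟨τ₁, τ₂, rfl⟩ := List.append_of_mem hx
    have hp1 : gP P τ₁ ≠ none :=
      gP_prefix_ne_none hg ⟨x :: τ₂, rfl⟩
    obtain ⟨ν₁, hν₁⟩ := Option.ne_none_iff_exists'.mp hp1
    have hp : gP P (τ₁ ++ [x]) ≠ none :=
      gP_prefix_ne_none hg ⟨τ₂, by simp⟩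
    rw [gP_append, hν₁, Option.bind_some] at hp
    have hl : P.D.label (ν₁ ++ [x]) ≠ none := by
      intro hc
      apply hp
      unfold gpath
      rw [if_pos hc]
    apply hM
    exact Set.mem_biUnion hl (by simp)

/-- The cycle-normal pre-proof. -/
noncomputable def PP' (P : PreProof) : PreProof where
  D := DT' P
  fin := fin' P
  C := comp' P
  comp := by
    intro σ S h
    obtain ⟨hpre, hne, hgeq⟩ := comp'_spec (P := P) h
    obtain ⟨ν, r₀, hν, hIP, hl₀, hr₀, _⟩ := label'_some_cases (P := P) h
    have hI : Inj P (comp' P σ) := hIP.inj_of_proper hpre hne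
    have hgc : gP P (comp' P σ) = some ν := by rw [hgeq, hν]
    exact ⟨r₀, by show label' P _ = _; rw [label'_inner hgc hI, hl₀], hr₀⟩

lemma PP'_cycleNormal (P : PreProof) : (PP' P).CycleNormal := by
  intro σ S h
  exact (comp'_spec (P := P) h).1

end CN3

section CN4
variable {P : PreProof}

lemma collision_order {χ ρ₁ ρ₂ : List ℕ} (h₁ : ρ₁ <+: χ) (h₂ : ρ₂ <+: χ) (hne : ρ₁ ≠ ρ₂)
    (hg : gP P ρ₁ = gP P ρ₂) :
    ∃ a b, a <+: b ∧ a ≠ b ∧ b <+: χ ∧ (b = ρ₁ ∨ b = ρ₂) ∧ gP P a = gP P b := by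
  rcases List.prefix_or_prefix_of_prefix h₁ h₂ with h | h
  · exact ⟨ρ₁, ρ₂, h, hne, h₂, Or.inr rfl, hg⟩
  · exact ⟨ρ₂, ρ₁, h, fun hc => hne hc.symm, h₁, Or.inl rfl, hg.symm⟩

lemma isUnfolding_PP' (P : PreProof) : IsUnfolding (PP' P) (unf P) := by
  refine ⟨?_, ?_, ?_⟩
  · intro σ h hb
    obtain ⟨⟨S, r⟩, hs⟩ := Option.ne_none_iff_exists'.mp h
    have hs' : label' P σ = some (S, r) := hs
    obtain ⟨ν, r₀, hν, hIP, hl₀, hr₀, hcases⟩ := label'_some_cases hs'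
    rcases hcases with ⟨hI, hre⟩ | ⟨hI, hre⟩
    · have : (PP' P).D.label σ = P.D.label ν := label'_inner hν hI
      rw [this]
      unfold unf
      rw [hν, Option.bind_some]
    · exact absurd ⟨S, by rw [hs, hre]⟩ hb
  · intro σ₁ σ₂ hb
    obtain ⟨S, hS⟩ := hb
    have hS' : label' P σ₁ = some (S, Rule.bud) := hS
    obtain ⟨-, -, hgeq⟩ := comp'_spec hS'
    show unf P (σ₁ ++ σ₂) = unf P (comp' P σ₁ ++ σ₂)
    unfold unf
    rw [gP_append, gP_append, hgeq]
  · intro σ h hnb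
    show unf P σ = none
    unfold unf
    cases hg : gP P σ with
    | none => rfl
    | some ν =>
      exfalso
      have hgne : gP P σ ≠ none := by simp [hg]
      have hNIP : ¬ InjP P σ := by
        intro hIP
        exact (label'_ne_none_iff.mpr ⟨hgne, hIP⟩) h
      unfold InjP at hNIP
      push_neg at hNIP
      obtain ⟨ρ₁, ρ₂, h₁, h₂, hne₁, hne₂, hgg, hnee⟩ := hNIP
      obtain ⟨a, b, hab, habne, hbχ, hbor, hgab⟩ := collision_order h₁ h₂ hnee hgg
      classical
      have hbt : b = σ.take b.length := List.prefix_iff_eq_take.mp hbχ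
      have hKex : ∃ k, ∃ ρ, ρ <+: σ.take k ∧ ρ ≠ σ.take k ∧ gP P ρ = gP P (σ.take k) :=
        ⟨b.length, a, by rw [← hbt]; exact hab, by rw [← hbt]; exact habne,
          by rw [← hbt]; exact hgab⟩
      set k₀ := Nat.find hKex with hk₀
      obtain ⟨ρ, hρp, hρne, hρg⟩ := Nat.find_spec hKex
      have hk₀le : k₀ ≤ b.length := Nat.find_le
        ⟨a, by rw [← hbt]; exact hab, by rw [← hbt]; exact habne, by rw [← hbt]; exact hgab⟩
      set π := σ.take k₀ with hπ
      have hπσ : π <+: σ := List.take_prefix _ _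
      have hπlen : π.length = k₀ := by
        rw [hπ, List.length_take]
        have := hbχ.length_le
        omega
      have hNI : ¬ Inj P π := fun hI => hρne (hI ρ π hρp (List.prefix_refl π) hρg)
      have hIPπ : InjP P π := by
        intro ρ₁' ρ₂' p₁ p₂ ne₁ ne₂ geq
        by_contra hne'
        obtain ⟨a', b', hab', habne', hb'π, hbor', hgab'⟩ := collision_order p₁ p₂ hne' geq
        have hb'neπ : b' ≠ π := by rcases hbor' with rfl | rfl; exact ne₁; exact ne₂
        have hlt : b'.length < k₀ := by
          have h1 := hb'π.length_le
          rw [hπlen] at h1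
          rcases lt_or_eq_of_le h1 with h' | h'
          · exact h'
          · exact absurd (hb'π.eq_of_length (by rw [hπlen]; exact h')) hb'neπ
        apply Nat.find_min hKex hlt
        have hb't : b' = σ.take b'.length := List.prefix_iff_eq_take.mp (hb'π.trans hπσ)
        exact ⟨a', by rw [← hb't]; exact hab', by rw [← hb't]; exact habne',
          by rw [← hb't]; exact hgab'⟩
      have hgπ : gP P π ≠ none := gP_prefix_ne_none hgne hπσ
      obtain ⟨νπ, hνπ⟩ := Option.ne_none_iff_exists'.mp hgπ
      obtain ⟨⟨Sπ, rπ⟩, hlπ⟩ := Option.ne_none_iff_exists'.mp (gP_inner hνπ).1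
      exact hnb π hπσ ⟨Sπ, label'_bud hνπ hNI hIPπ hlπ⟩

end CN4

/-- **Cycle-normalization.** Every pre-proof has a cycle-normal
    pre-proof with the same tree-unfolding, using (apart from buds) only rules
    that occur in the original pre-proof. -/
theorem cycle_normalization (P : PreProof) :
    ∃ P' : PreProof, P'.CycleNormal ∧
      (∀ T : Lbl, IsUnfolding P T ↔ IsUnfolding P' T) ∧
      (∀ r : Rule, usesRule P'.D.label (· = r) → r = Rule.bud ∨ usesRule P.D.label (· = r)) := by
  refine ⟨PP' P, PP'_cycleNormal P, ?_, ?_⟩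
  · intro T
    constructor
    · intro hT
      rw [unfolding_unique hT (isUnfolding_unf P)]
      exact isUnfolding_PP' P
    · intro hT
      rw [unfolding_unique hT (isUnfolding_PP' P)]
      exact isUnfolding_unf P
  · rintro r ⟨σ, S, r', hσ, hQ⟩
    have hrr : r' = r := hQ
    subst hrr
    have hσ' : label' P σ = some (S, r') := hσ
    obtain ⟨ν, r₀, hν, hIP, hl₀, hr₀, hcases⟩ := label'_some_cases hσ'
    rcases hcases with ⟨hI, hre⟩ | ⟨hI, hre⟩
    · exact Or.inr ⟨ν, S, r₀, hl₀, hre.symm⟩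
    · exact Or.inl hre

end CLKID
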